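/- Let X be a spherical 2-design of size n which is an s-distance set in √m S^{m-1}, with predegree polynomials {q_i}. Then (1/n)H((nG)^∘) = I, where H(t) = ∑_{i=0}^s q_i(t), G is the normalized Gram matrix, and for f ∈ ℝ[t] and matrix M, f(M^∘) denotes the matrix (f(M_{x,y}))_{x,y}. -/

import Mathlib

open scoped InnerProductSpace Classical

noncomputable section

variable {V : Type*} [NormedAddCommGroup V] [InnerProductSpace ℝ V]

/-- `X` lies on the sphere of squared radius `m` (radius `√m`). -/
def onSphere (m : ℝ) (X : Finset V) : Prop := ∀ x ∈ X, ⟪x, x⟫_ℝ = m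

/-- The normalized Gram matrix `G` of `X`. -/
def gram (X : Finset V) : Matrix X X ℝ :=
  Matrix.of fun x y => (1 / (X.card : ℝ)) * ⟪(x : V), (y : V)⟫_ℝ

/-- The two conditions characterizing spherical 2-designs: `GJ = 0` and `G² = G`. -/
def IsTwoDesign (X : Finset V) : Prop :=
  (∀ x ∈ X, ∑ y ∈ X, ⟪x, y⟫_ℝ = 0) ∧
  (∀ x ∈ X, ∀ y ∈ X, (1 / (X.card : ℝ)) * ∑ z ∈ X, ⟪x, z⟫_ℝ * ⟪z, y⟫_ℝ = ⟪x, y⟫_ℝ)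

/-- `Pol_k(X)`: span of the zonal polynomials of degree at most `k`. -/
def Pol (X : Finset V) (k : ℕ) : Submodule ℝ (X → ℝ) :=
  Submodule.span ℝ {f | ∃ a ∈ X, ∃ p : Polynomial ℝ,
    p.natDegree ≤ k ∧ f = fun x => p.eval ⟪a, x.1⟫_ℝ}

/-- The inner product `(f,g) = (1/n) ∑ f(x) g(x)` on `C(X)`. -/
def inn (X : Finset V) (f g : X → ℝ) : ℝ := (1 / (X.card : ℝ)) * ∑ x, f x * g x

def innL (X : Finset V) (f : X → ℝ) : (X → ℝ) →ₗ[ℝ] ℝ where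
  toFun g := inn X f g
  map_add' g h := by
    simp only [inn, Pi.add_apply, mul_add, Finset.sum_add_distrib]
  map_smul' c g := by
    simp only [inn, Pi.smul_apply, smul_eq_mul, RingHom.id_apply]
    rw [Finset.sum_congr rfl (fun x _ => by ring : ∀ x ∈ Finset.univ, f x * (c * g x) = c * (f x * g x)),
      ← Finset.mul_sum]
    ring

/-- The orthogonal complement of `W` with respect to `inn`. -/
def perp (X : Finset V) (W : Submodule ℝ (X → ℝ)) : Submodule ℝ (X → ℝ) :=
  ⨅ f ∈ W, LinearMap.ker (innL X f)

/-- The harmonic spaces `Harm_k(X)`. -/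
def Harm (X : Finset V) : ℕ → Submodule ℝ (X → ℝ)
  | 0 => Pol X 0
  | (k+1) => Pol X (k+1) ⊓ perp X (Pol X k)

/-- `F` is the matrix of the orthogonal projection of `C(X)` onto `W`
(with respect to the inner product `inn`). -/
def IsProjOnto (X : Finset V) (W : Submodule ℝ (X → ℝ)) (F : Matrix X X ℝ) : Prop :=
  (∀ f, F.mulVec f ∈ W) ∧ (∀ f ∈ W, F.mulVec f = f) ∧ (∀ f ∈ perp X W, F.mulVec f = 0)

/-- The degree `S` of `X`: the least `i` with `Pol_i(X) = C(X)`. -/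
def degS (X : Finset V) : ℕ := sInf {i | Pol X i = ⊤}

/-- `A(X)`, the set of inner products between distinct points of `X`. -/
def Aset (X : Finset V) : Finset ℝ :=
  ((X ×ˢ X).filter fun p => p.1 ≠ p.2).image fun p => ⟪p.1, p.2⟫_ℝ

/-- `A'(X) = A(X) ∪ {m}`. -/
def Aset' (m : ℝ) (X : Finset V) : Finset ℝ := insert m (Aset X)

/-- `κ_α`, the number of ordered pairs of points of `X` with inner product `α`. -/
def kappa (X : Finset V) (α : ℝ) : ℕ := ((X ×ˢ X).filter fun p => ⟪p.1, p.2⟫_ℝ = α).card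

/-- The inner product `⟨p,q⟩ = (1/n²) ∑_{α ∈ A'(X)} κ_α p(α) q(α)` on polynomials. -/
def pInn (m : ℝ) (X : Finset V) (p q : Polynomial ℝ) : ℝ :=
  (1 / (X.card : ℝ) ^ 2) * ∑ α ∈ Aset' m X, (kappa X α : ℝ) * (p.eval α * q.eval α)

/-- `q` is the family of predegree polynomials of `X`. -/
def IsPredegree (m : ℝ) (X : Finset V) (s : ℕ) (q : ℕ → Polynomial ℝ) : Prop :=
  (∀ k ≤ s, (q k).natDegree = k ∧ q k ≠ 0) ∧
  (∀ k ≤ s, ∀ h ≤ s, pInn m X (q k) (q h) = if k = h then (q k).eval m else 0)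

/-- The relation matrix `A_α` of `X`. -/
def relMat (X : Finset V) (α : ℝ) : Matrix X X ℝ :=
  Matrix.of fun x y => if ⟪(x : V), (y : V)⟫_ℝ = α then 1 else 0

/-- `X` carries the structure of a `Q`-polynomial association scheme with respect to
the idempotents `F_0, …, F_s` (whose relations are given by the inner products). -/
def CarriesQPolyScheme (m : ℝ) (X : Finset V) (s : ℕ) (F : ℕ → Matrix X X ℝ) : Prop :=
  (∀ α ∈ Aset' m X, ∀ β ∈ Aset' m X, relMat X α * relMat X β ∈
      Submodule.span ℝ (relMat X '' (Aset' m X : Set ℝ))) ∧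
  (∀ i ≤ s, F i ∈ Submodule.span ℝ (relMat X '' (Aset' m X : Set ℝ))) ∧
  (∀ i ≤ s, ∀ j ≤ s, F i * F j = if i = j then F i else 0) ∧
  (∑ i ∈ Finset.range (s + 1), F i = 1) ∧
  (F 0 = Matrix.of fun _ _ => 1 / (X.card : ℝ)) ∧
  (∀ i ≤ s, ∃ v : Polynomial ℝ, v.natDegree = i ∧
      F i = Matrix.of fun x y => (1 / (X.card : ℝ)) * v.eval ((X.card : ℝ) * F 1 x y))



lemma eq_of_inner_eq_m' {m : ℝ} {X : Finset V} (hsph : onSphere m X)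
    {x y : V} (hx : x ∈ X) (hy : y ∈ X) (h : ⟪x, y⟫_ℝ = m) : x = y := by
  have hz : ⟪x - y, x - y⟫_ℝ = 0 := by
    have hyx : ⟪y, x⟫_ℝ = m := by rw [real_inner_comm]; exact h
    rw [inner_sub_left, inner_sub_right, inner_sub_right, hsph x hx, hsph y hy, h, hyx]; ring
  have hxy := inner_self_eq_zero.mp hz
  exact sub_eq_zero.mp hxy

lemma m_not_mem_Aset {m : ℝ} {X : Finset V} (hsph : onSphere m X) :
    m ∉ Aset X := by
  intro hm
  simp only [Aset, Finset.mem_image, Finset.mem_filter, Finset.mem_product] at hm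
  obtain ⟨⟨x, y⟩, ⟨⟨hx, hy⟩, hne⟩, hval⟩ := hm
  exact hne (eq_of_inner_eq_m' hsph hx hy hval)

lemma kappa_m {m : ℝ} {X : Finset V} (hsph : onSphere m X) :
    kappa X m = X.card := by
  unfold kappa
  have : ((X ×ˢ X).filter fun p => ⟪p.1, p.2⟫_ℝ = m) = X.image (fun x => (x, x)) := by
    ext ⟨a, b⟩
    simp only [Finset.mem_filter, Finset.mem_product, Finset.mem_image, Prod.mk.injEq]
    constructor
    · rintro ⟨⟨ha, hb⟩, hval⟩
      exact ⟨a, ha, rfl, eq_of_inner_eq_m' hsph ha hb hval⟩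
    · rintro ⟨c, hc, rfl, rfl⟩
      exact ⟨⟨hc, hc⟩, hsph c hc⟩
  rw [this, Finset.card_image_of_injective _ (fun a b h => (Prod.mk.injEq _ _ _ _).mp h |>.1)]

lemma kappa_pos {X : Finset V} {α : ℝ} (hα : α ∈ Aset X) : 0 < kappa X α := by
  simp only [Aset, Finset.mem_image, Finset.mem_filter, Finset.mem_product] at hα
  obtain ⟨⟨x, y⟩, ⟨⟨hx, hy⟩, _⟩, hval⟩ := hα
  refine Finset.card_pos.mpr ⟨(x, y), ?_⟩
  simp [Finset.mem_filter, Finset.mem_product, hx, hy, hval]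

/-- Polynomials of degree `≤ s` lie in the span of the predegree polynomials. -/
lemma mem_span_q (s : ℕ) (q : ℕ → Polynomial ℝ)
    (hdeg : ∀ k ≤ s, (q k).natDegree = k ∧ q k ≠ 0) :
    ∀ n, n ≤ s → ∀ p : Polynomial ℝ, p.natDegree ≤ n →
      p ∈ Submodule.span ℝ (q '' Set.Iic s) := by
  intro n
  induction n with
  | zero =>
    intro _ p hp
    obtain ⟨c, hc⟩ := Polynomial.natDegree_eq_zero.mp ((hdeg 0 (Nat.zero_le _)).1)
    obtain ⟨d, hd⟩ := Polynomial.natDegree_eq_zero.mp (Nat.le_zero.mp hp)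
    have hc0 : c ≠ 0 := by
      intro h; exact (hdeg 0 (Nat.zero_le _)).2 (by rw [← hc, h, map_zero])
    have : p = (d / c) • q 0 := by
      rw [← hc, ← hd, Polynomial.smul_C, smul_eq_mul, div_mul_cancel₀ _ hc0]
    rw [this]
    exact Submodule.smul_mem _ _ (Submodule.subset_span ⟨0, Set.mem_Iic.mpr (Nat.zero_le _), rfl⟩)
  | succ n ih =>
    intro hns p hp
    set c : ℝ := p.coeff (n + 1) / (q (n + 1)).leadingCoeff with hc
    set r : Polynomial ℝ := p - c • q (n + 1) with hr
    have hlc : (q (n + 1)).leadingCoeff ≠ 0 :=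
      Polynomial.leadingCoeff_ne_zero.mpr (hdeg (n + 1) hns).2
    have hqd : (q (n + 1)).natDegree = n + 1 := (hdeg (n + 1) hns).1
    have hrd : r.natDegree ≤ n := by
      rw [Polynomial.natDegree_le_iff_coeff_eq_zero]
      intro j hj
      rcases Nat.lt_or_ge (n + 1) j with hj' | hj'
      · have h1 : p.coeff j = 0 := Polynomial.coeff_eq_zero_of_natDegree_lt (lt_of_le_of_lt hp hj')
        have h2 : (q (n + 1)).coeff j = 0 :=
          Polynomial.coeff_eq_zero_of_natDegree_lt (by omega)
        simp [hr, h1, h2]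
      · have hj2 : j = n + 1 := by omega
        subst hj2
        have : (q (n + 1)).coeff (n + 1) = (q (n + 1)).leadingCoeff := by
          rw [Polynomial.leadingCoeff, hqd]
        simp [hr, this, hc, div_mul_cancel₀ _ hlc]
    have hrmem := ih (le_of_lt hns) r hrd
    have : p = r + c • q (n + 1) := by rw [hr]; ring
    rw [this]
    exact Submodule.add_mem _ hrmem
      (Submodule.smul_mem _ _ (Submodule.subset_span ⟨n + 1, Set.mem_Iic.mpr hns, rfl⟩))

theorem statement_7 {m : ℕ} (X : Finset (EuclideanSpace ℝ (Fin m))) (hne : X.Nonempty)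
    (hsph : onSphere (m : ℝ) X) (hdes : IsTwoDesign X) (s : ℕ) (hs : (Aset X).card = s)
    (q : ℕ → Polynomial ℝ) (hq : IsPredegree (m : ℝ) X s q) :
    Matrix.of (fun x y : X =>
        (1 / (X.card : ℝ)) * ∑ i ∈ Finset.range (s + 1), (q i).eval ⟪x.1, y.1⟫_ℝ) =
      (1 : Matrix X X ℝ) := by
  classical
  set n : ℝ := (X.card : ℝ) with hn
  have hn0 : (0:ℝ) < n := by rw [hn]; exact_mod_cast Finset.card_pos.mpr hne
  have hnne : n ≠ 0 := ne_of_gt hn0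
  have hn2 : n ^ 2 ≠ 0 := pow_ne_zero _ hnne
  set H : Polynomial ℝ := ∑ i ∈ Finset.range (s + 1), q i with hH
  have hmA : (m : ℝ) ∉ Aset X := m_not_mem_Aset hsph
  -- sum splitting formula
  have hsum : ∀ p : Polynomial ℝ, pInn (m:ℝ) X H p =
      (1 / n ^ 2) * (n * (H.eval (m:ℝ) * p.eval (m:ℝ)) +
        ∑ α ∈ Aset X, (kappa X α : ℝ) * (H.eval α * p.eval α)) := by
    intro p
    unfold pInn Aset'
    rw [Finset.sum_insert hmA, kappa_m hsph]
  -- additivity / homogeneity of pInn in the second argument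
  have hadd : ∀ a b : Polynomial ℝ, pInn (m:ℝ) X H (a + b) =
      pInn (m:ℝ) X H a + pInn (m:ℝ) X H b := by
    intro a b
    simp only [pInn, Polynomial.eval_add]
    rw [← mul_add, ← Finset.sum_add_distrib]
    congr 1
    apply Finset.sum_congr rfl
    intros; ring
  have hsmul : ∀ (c : ℝ) (a : Polynomial ℝ), pInn (m:ℝ) X H (c • a) =
      c * pInn (m:ℝ) X H a := by
    intro c a
    simp only [pInn, Polynomial.eval_smul, smul_eq_mul, Finset.mul_sum]
    apply Finset.sum_congr rfl
    intros; ring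
  -- reproducing property
  have hrep' : ∀ p ∈ Submodule.span ℝ (q '' Set.Iic s),
      pInn (m:ℝ) X H p = p.eval (m:ℝ) := by
    intro p hmem
    induction hmem using Submodule.span_induction with
    | mem x hx =>
      obtain ⟨k, hk, rfl⟩ := hx
      have hk' : k ≤ s := hk
      have expand : pInn (m:ℝ) X H (q k) =
          ∑ i ∈ Finset.range (s + 1), pInn (m:ℝ) X (q i) (q k) := by
        simp only [hH, pInn, Polynomial.eval_finset_sum, Finset.sum_mul, Finset.mul_sum]
        rw [Finset.sum_comm]
      rw [expand,
        Finset.sum_congr rfl (fun i hi => hq.2 i (by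
          simp only [Finset.mem_range] at hi; omega) k hk'),
        Finset.sum_ite_eq']
      simp [Finset.mem_range, Nat.lt_succ_of_le hk']
    | zero => simp [pInn]
    | add a b _ _ ha hb => rw [hadd, ha, hb, Polynomial.eval_add]
    | smul c a _ ha => rw [hsmul, ha, Polynomial.eval_smul, smul_eq_mul]
  have hrep : ∀ p : Polynomial ℝ, p.natDegree ≤ s → pInn (m:ℝ) X H p = p.eval (m:ℝ) :=
    fun p hp => hrep' p (mem_span_q s q hq.1 s le_rfl p hp)
  -- H(m) = n
  set P : Polynomial ℝ := ∏ α ∈ Aset X, (Polynomial.X - Polynomial.C α) with hP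
  have hPdeg : P.natDegree ≤ s := le_trans (Polynomial.natDegree_prod_le _ _)
    (by simp [Polynomial.natDegree_X_sub_C, hs])
  have hPm : P.eval (m:ℝ) ≠ 0 := by
    rw [hP, Polynomial.eval_prod]
    apply Finset.prod_ne_zero_iff.mpr
    intro α hα
    simp only [Polynomial.eval_sub, Polynomial.eval_X, Polynomial.eval_C]
    exact sub_ne_zero.mpr (fun h => hmA (h ▸ hα))
  have e1 := hrep P hPdeg
  rw [hsum] at e1
  have hzero : ∑ α ∈ Aset X, (kappa X α : ℝ) * (H.eval α * P.eval α) = 0 :=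
    Finset.sum_eq_zero (fun α hα => by
      rw [hP, Polynomial.eval_prod, Finset.prod_eq_zero hα (by simp)]; ring)
  rw [hzero, add_zero] at e1
  have e1' : n * (H.eval (m:ℝ) * P.eval (m:ℝ)) = n ^ 2 * P.eval (m:ℝ) := by
    have h := congrArg (fun t => n ^ 2 * t) e1
    rw [← mul_assoc, mul_one_div, div_self hn2, one_mul] at h
    exact h
  have hHm : H.eval (m:ℝ) = n := by
    have h2 : H.eval (m:ℝ) * P.eval (m:ℝ) = n * P.eval (m:ℝ) :=
      mul_left_cancel₀ hnne (by rw [e1']; ring)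
    exact mul_right_cancel₀ hPm h2
  -- H(β) = 0 for β ∈ A(X)
  have hHA : ∀ β ∈ Aset X, H.eval β = 0 := by
    intro β hβ
    set Pb : Polynomial ℝ := ∏ α ∈ (Aset X).erase β, (Polynomial.X - Polynomial.C α) with hPb
    have hPbdeg : Pb.natDegree ≤ s := le_trans (Polynomial.natDegree_prod_le _ _)
      (by simp only [Polynomial.natDegree_X_sub_C, Finset.sum_const, smul_eq_mul, mul_one]
          rw [Finset.card_erase_of_mem hβ, hs]; omega)
    have hPbβ : Pb.eval β ≠ 0 := by
      rw [hPb, Polynomial.eval_prod]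
      apply Finset.prod_ne_zero_iff.mpr
      intro α hα
      simp only [Polynomial.eval_sub, Polynomial.eval_X, Polynomial.eval_C]
      exact sub_ne_zero.mpr (Ne.symm (Finset.ne_of_mem_erase hα))
    have e := hrep Pb hPbdeg
    rw [hsum] at e
    have hsingle : ∑ α ∈ Aset X, (kappa X α : ℝ) * (H.eval α * Pb.eval α) =
        (kappa X β : ℝ) * (H.eval β * Pb.eval β) := by
      apply Finset.sum_eq_single β
      · intro α hα hne
        rw [hPb, Polynomial.eval_prod,
          Finset.prod_eq_zero (Finset.mem_erase.mpr ⟨hne, hα⟩) (by simp)]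
        ring
      · intro h; exact absurd hβ h
    rw [hsingle, hHm] at e
    have e2 : (kappa X β : ℝ) * (H.eval β * Pb.eval β) = 0 := by
      have h := congrArg (fun t => n ^ 2 * t) e
      rw [← mul_assoc, mul_one_div, div_self hn2, one_mul] at h
      linear_combination h
    have hκ : (kappa X β : ℝ) ≠ 0 := Nat.cast_ne_zero.mpr (kappa_pos hβ).ne'
    rcases mul_eq_zero.mp e2 with h | h
    · exact absurd h hκ
    rcases mul_eq_zero.mp h with h' | h'
    · exact h'
    · exact absurd h' hPbβ
  -- conclude
  ext x y
  simp only [Matrix.of_apply, Matrix.one_apply]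
  rw [show ∑ i ∈ Finset.range (s + 1), (q i).eval ⟪x.1, y.1⟫_ℝ = H.eval ⟪x.1, y.1⟫_ℝ from
    (Polynomial.eval_finset_sum _ _ _).symm]
  by_cases hxy : x = y
  · subst hxy
    rw [hsph x.1 x.2, hHm, if_pos rfl, one_div, inv_mul_cancel₀ hnne]
  · have hmem : ⟪x.1, y.1⟫_ℝ ∈ Aset X := by
      simp only [Aset, Finset.mem_image, Finset.mem_filter, Finset.mem_product]
      exact ⟨(x.1, y.1), ⟨⟨x.2, y.2⟩, fun h => hxy (Subtype.ext h)⟩, rfl⟩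
    rw [hHA _ hmem, mul_zero, if_neg hxy]

end
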